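/- If 0 < x_1 < ... < x_{n+1} < 1, the inverse of the Bernstein–Vandermonde matrix A admits a factorization A^{-1} = G_1 G_2 ··· G_n D^{-1} F_n F_{n-1} ··· F_1, where each F_i is a lower bidiagonal matrix with unit diagonal whose only nonzero subdiagonal entries are -m_{k,i} in rows k = i+1,...,n+1, each G_i is the transpose of such a lower bidiagonal matrix with subdiagonal entries -m̃_{k,i}, and D = diag(p_{1,1},...,p_{n+1,n+1}). -/

import Mathlib

/-- Closed form of the Neville multipliers m_{i,j} of the Bernstein–Vandermonde matrix
(1-based paper indexing). -/
noncomputable def mBV (n : ℕ) (x : ℕ → ℝ) (i j : ℕ) : ℝ :=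
  (1 - x i) ^ (n + 1 - j) * (1 - x (i - j)) *
      (∏ k ∈ Finset.Icc 1 (j - 1), (x i - x (i - k))) /
    ((1 - x (i - 1)) ^ (n + 2 - j) * ∏ k ∈ Finset.Icc 2 j, (x (i - 1) - x (i - k)))

/-- Closed form of the Neville multipliers m̃_{i,j} of the transpose. -/
noncomputable def mtBV (n : ℕ) (x : ℕ → ℝ) (i j : ℕ) : ℝ :=
  ((n : ℝ) - i + 2) * x j / (((i : ℝ) - 1) * (1 - x j))

/-- Closed form of the diagonal pivots p_{i,i}. -/
noncomputable def pBV (n : ℕ) (x : ℕ → ℝ) (i : ℕ) : ℝ :=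
  (n.choose (i - 1) : ℝ) * (1 - x i) ^ (n + 1 - i) *
      (∏ k ∈ Finset.Ico 1 i, (x i - x k)) / ∏ k ∈ Finset.Icc 1 (i - 1), (1 - x k)

/-- F_i: lower bidiagonal, unit diagonal, subdiagonal entries -m_{k,i} in
(paper) rows k = i+1,...,n+1. Matrix indices are 0-based: row k ↔ paper row k+1. -/
noncomputable def FBV (n : ℕ) (x : ℕ → ℝ) (i : ℕ) : Matrix (Fin (n + 1)) (Fin (n + 1)) ℝ :=
  Matrix.of fun k l =>
    if k = l then 1
    else if (k : ℕ) = (l : ℕ) + 1 ∧ i ≤ (k : ℕ) then -(mBV n x ((k : ℕ) + 1) i) else 0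

/-- G_i: transpose of a lower bidiagonal matrix with subdiagonal entries -m̃_{k,i}. -/
noncomputable def GBV (n : ℕ) (x : ℕ → ℝ) (i : ℕ) : Matrix (Fin (n + 1)) (Fin (n + 1)) ℝ :=
  Matrix.of fun k l =>
    if k = l then 1
    else if (l : ℕ) = (k : ℕ) + 1 ∧ i ≤ (l : ℕ) then -(mtBV n x ((l : ℕ) + 1) i) else 0

/-- D = diag(p_{1,1},...,p_{n+1,n+1}). -/
noncomputable def DBV (n : ℕ) (x : ℕ → ℝ) : Matrix (Fin (n + 1)) (Fin (n + 1)) ℝ :=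
  Matrix.diagonal fun k => pBV n x ((k : ℕ) + 1)

noncomputable def hpol (u : ℕ → ℝ) : ℕ → ℕ → ℕ → ℝ
  | 0, _, _ => 1
  | m+1, a, b => if b < a then 0 else hpol u (m+1) (a+1) b + u a * hpol u m a b
termination_by m a b => (m, b + 1 - a)
decreasing_by
  · apply Prod.Lex.right; omega
  · apply Prod.Lex.left; omega

@[simp] lemma hpol_zero (u : ℕ → ℝ) (a b : ℕ) : hpol u 0 a b = 1 := by rw [hpol]

lemma hpol_succ (u : ℕ → ℝ) (m a b : ℕ) :
    hpol u (m+1) a b = if b < a then 0 else hpol u (m+1) (a+1) b + u a * hpol u m a b := by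
  rw [hpol]

lemma hpol_of_lt (u : ℕ → ℝ) (m a b : ℕ) (h : b < a) : hpol u (m+1) a b = 0 := by
  rw [hpol_succ, if_pos h]

lemma hpol_single (u : ℕ → ℝ) (m a : ℕ) : hpol u m a a = u a ^ m := by
  induction m with
  | zero => simp
  | succ m ih =>
      rw [hpol_succ, if_neg (by omega), hpol_of_lt _ _ _ _ (by omega), ih]; ring

lemma hpol_last (u : ℕ → ℝ) (m a b : ℕ) (hab : a ≤ b + 1) :
    hpol u (m+1) a (b+1) = hpol u (m+1) a b + u (b+1) * hpol u m a (b+1) := by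
  rcases eq_or_lt_of_le hab with h | h
  · subst h
    rw [hpol_single, hpol_of_lt _ _ _ _ (by omega), hpol_single]; ring
  · have hab' : a ≤ b := by omega
    match m with
    | 0 =>
      rw [hpol_succ u 0 a (b+1), if_neg (by omega), hpol_succ u 0 a b, if_neg (by omega),
        hpol_last u 0 (a+1) b (by omega)]
      simp; ring
    | m+1 =>
      rw [hpol_succ u (m+1) a (b+1), if_neg (by omega), hpol_succ u (m+1) a b,
        if_neg (by omega)]
      have E3 : hpol u (m+1) a (b+1) = hpol u (m+1) (a+1) (b+1) + u a * hpol u m a (b+1) := by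
        rw [hpol_succ, if_neg (by omega)]
      linear_combination hpol_last u (m+1) (a+1) b (by omega) +
        u a * hpol_last u m a b (by omega) - u (b+1) * E3
termination_by (m, b + 1 - a)
decreasing_by
  · apply Prod.Lex.right; omega
  · apply Prod.Lex.right; omega
  · apply Prod.Lex.left; omega

lemma hpol_diff (u : ℕ → ℝ) (m a b : ℕ) (hab : a ≤ b + 1) :
    hpol u (m+1) (a+1) (b+1) - hpol u (m+1) a b = (u (b+1) - u a) * hpol u m a (b+1) := by
  rcases eq_or_lt_of_le hab with h | h
  · subst h
    rw [hpol_of_lt _ _ _ _ (by omega), hpol_of_lt _ _ _ _ (by omega)]; ring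
  · have hab' : a ≤ b := by omega
    induction m with
    | zero =>
      rw [hpol_last u 0 (a+1) b (by omega), hpol_succ u 0 a b, if_neg (by omega)]
      simp
    | succ m ih =>
      have E1 := hpol_last u (m+1) (a+1) b (by omega)
      have E2 : hpol u (m+1+1) a b = hpol u (m+1+1) (a+1) b + u a * hpol u (m+1) a b := by
        rw [hpol_succ, if_neg (by omega)]
      have E4 := hpol_last u m a b (by omega)
      linear_combination E1 - E2 + u (b+1) * ih - (u (b+1) - u a) * E4

noncomputable def uu (x : ℕ → ℝ) (m : ℕ) : ℝ := x m / (1 - x m)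

noncomputable def Pu (x : ℕ → ℝ) (s i : ℕ) : ℝ :=
  ∏ k ∈ Finset.range s, (uu x (i+1) - uu x (i-k))

section BVfacts
variable (n : ℕ) (x : ℕ → ℝ)
    (hx : ∀ k, 1 ≤ k → k ≤ n + 1 → 0 < x k ∧ x k < 1)
    (hmono : ∀ k l, 1 ≤ k → k < l → l ≤ n + 1 → x k < x l)

include hx in
lemma one_sub_pos : ∀ m, 1 ≤ m → m ≤ n+1 → (0:ℝ) < 1 - x m := by
  intro m h1 h2; linarith [(hx m h1 h2).2]

lemma uu_sub (a b : ℕ) (ha : (1:ℝ) - x a ≠ 0) (hb : (1:ℝ) - x b ≠ 0) :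
    uu x a - uu x b = (x a - x b) / ((1 - x a) * (1 - x b)) := by
  unfold uu; field_simp; ring

include hx hmono in
lemma uu_sub_pos (a b : ℕ) (h1 : 1 ≤ b) (h2 : b < a) (h3 : a ≤ n+1) :
    0 < uu x a - uu x b := by
  rw [uu_sub x a b (ne_of_gt (one_sub_pos n x hx a (by omega) h3))
    (ne_of_gt (one_sub_pos n x hx b h1 (by omega)))]
  apply div_pos (by linarith [hmono b a h1 h2 h3])
  exact mul_pos (one_sub_pos n x hx a (by omega) h3) (one_sub_pos n x hx b h1 (by omega))

include hx hmono in
lemma Pu_pos (s i : ℕ) (hsi : s ≤ i) (hi : i ≤ n) : 0 < Pu x s i := by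
  apply Finset.prod_pos
  intro k hk
  simp only [Finset.mem_range] at hk
  exact uu_sub_pos n x hx hmono (i+1) (i-k) (by omega) (by omega) (by omega)

include hx in
lemma Pu_eq (s i : ℕ) (hsi : s ≤ i) (hi : i ≤ n) :
    Pu x s i = (∏ k ∈ Finset.range s, (x (i+1) - x (i-k))) /
      ((1 - x (i+1))^s * ∏ k ∈ Finset.range s, (1 - x (i-k))) := by
  unfold Pu
  rw [Finset.prod_congr rfl (fun k hk => uu_sub x (i+1) (i-k)
      (ne_of_gt (one_sub_pos n x hx (i+1) (by omega) (by omega)))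
      (ne_of_gt (one_sub_pos n x hx (i-k) (by simp only [Finset.mem_range] at hk; omega)
        (by omega))))]
  rw [Finset.prod_div_distrib, Finset.prod_mul_distrib, Finset.prod_const, Finset.card_range]

lemma prod_Icc_one (f : ℕ → ℝ) (s : ℕ) :
    ∏ k ∈ Finset.Icc 1 s, f k = ∏ k ∈ Finset.range s, f (1+k) := by
  rw [← Finset.Ico_add_one_right_eq_Icc, Finset.prod_Ico_eq_prod_range]
  simp

lemma prod_Icc_two (f : ℕ → ℝ) (s : ℕ) :
    ∏ k ∈ Finset.Icc 2 (s+1), f k = ∏ k ∈ Finset.range s, f (2+k) := by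
  rw [← Finset.Ico_add_one_right_eq_Icc, Finset.prod_Ico_eq_prod_range]
  congr 1

lemma tel_id (s i : ℕ) (hsi : s + 1 ≤ i) :
    (1 - x (i-s)) * ∏ k ∈ Finset.range s, (1 - x (i-k)) =
      (1 - x i) * ∏ k ∈ Finset.range s, (1 - x (i-1-k)) := by
  cases s with
  | zero => simp
  | succ s' =>
      rw [Finset.prod_range_succ' (fun k => 1 - x (i-k)) s',
        Finset.prod_range_succ (fun k => 1 - x (i-1-k)) s']
      have hp : ∏ k ∈ Finset.range s', (1 - x (i-(k+1))) =
          ∏ k ∈ Finset.range s', (1 - x (i-1-k)) :=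
        Finset.prod_congr rfl (fun k _ => by congr 2; omega)
      rw [hp, show i - 0 = i from rfl, show i - (s'+1) = i - 1 - s' from by omega]
      ring
end BVfacts

lemma FBV_mul_apply (n : ℕ) (x : ℕ → ℝ) (p : ℕ) (hp1 : 1 ≤ p)
    (M : Matrix (Fin (n+1)) (Fin (n+1)) ℝ) (i j : Fin (n+1)) :
    (FBV n x p * M) i j = M i j -
      (if h : p ≤ (i : ℕ) then
        mBV n x ((i : ℕ) + 1) p * M ⟨(i : ℕ) - 1, by omega⟩ j else 0) := by
  rw [Matrix.mul_apply]
  by_cases hpi : p ≤ (i : ℕ)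
  · have hi1 : 1 ≤ (i : ℕ) := le_trans hp1 hpi
    have hilt : (i : ℕ) - 1 < n + 1 := by omega
    rw [dif_pos hpi]
    have key : ∀ k : Fin (n+1), FBV n x p i k * M k j =
        (if k = i then M i j else 0) +
        (if k = (⟨(i : ℕ) - 1, hilt⟩ : Fin (n+1)) then -(mBV n x ((i : ℕ) + 1) p) * M k j else 0) := by
      intro k
      by_cases hk : k = i
      · subst hk
        rw [if_pos rfl, if_neg (by simp [Fin.ext_iff]; omega)]
        simp [FBV]
      · rw [if_neg hk]
        by_cases hk2 : k = (⟨(i : ℕ) - 1, hilt⟩ : Fin (n+1))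
        · subst hk2
          rw [if_pos rfl]
          simp only [FBV, Matrix.of_apply]
          rw [if_neg (by simp [Fin.ext_iff]; omega), if_pos ⟨by omega, hpi⟩]
          simp
        · rw [if_neg hk2]
          simp only [FBV, Matrix.of_apply]
          rw [if_neg (fun h => hk (by rw [h])), if_neg]
          · ring
          · rintro ⟨h1, h2⟩
            exact hk2 (by simp [Fin.ext_iff]; omega)
    rw [Finset.sum_congr rfl (fun k _ => key k), Finset.sum_add_distrib,
      Finset.sum_ite_eq' Finset.univ i (fun _ => M i j),
      Finset.sum_ite_eq' Finset.univ (⟨(i : ℕ) - 1, hilt⟩ : Fin (n+1))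
        (fun k => -(mBV n x ((i : ℕ) + 1) p) * M k j)]
    simp only [Finset.mem_univ, if_pos]
    ring
  · rw [dif_neg hpi]
    have key : ∀ k : Fin (n+1), FBV n x p i k * M k j = (if k = i then M i j else 0) := by
      intro k
      by_cases hk : k = i
      · subst hk; simp [FBV]
      · rw [if_neg hk]
        simp only [FBV, Matrix.of_apply]
        rw [if_neg (fun h => hk (by rw [h])), if_neg (by rintro ⟨h1, h2⟩; exact hpi h2)]
        ring
    rw [Finset.sum_congr rfl (fun k _ => key k),
      Finset.sum_ite_eq' Finset.univ i (fun _ => M i j)]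
    simp

lemma mul_GBV_apply (n : ℕ) (x : ℕ → ℝ) (p : ℕ) (hp1 : 1 ≤ p)
    (M : Matrix (Fin (n+1)) (Fin (n+1)) ℝ) (i j : Fin (n+1)) :
    (M * GBV n x p) i j = M i j -
      (if h : p ≤ (j : ℕ) then
        mtBV n x ((j : ℕ) + 1) p * M i ⟨(j : ℕ) - 1, by omega⟩ else 0) := by
  rw [Matrix.mul_apply]
  by_cases hpj : p ≤ (j : ℕ)
  · have hj1 : 1 ≤ (j : ℕ) := le_trans hp1 hpj
    have hjlt : (j : ℕ) - 1 < n + 1 := by omega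
    rw [dif_pos hpj]
    have key : ∀ k : Fin (n+1), M i k * GBV n x p k j =
        (if k = j then M i j else 0) +
        (if k = (⟨(j : ℕ) - 1, hjlt⟩ : Fin (n+1)) then -(mtBV n x ((j : ℕ) + 1) p) * M i k else 0) := by
      intro k
      by_cases hk : k = j
      · subst hk
        rw [if_pos rfl, if_neg (by simp [Fin.ext_iff]; omega)]
        simp [GBV]
      · rw [if_neg hk]
        by_cases hk2 : k = (⟨(j : ℕ) - 1, hjlt⟩ : Fin (n+1))
        · subst hk2
          rw [if_pos rfl]
          simp only [GBV, Matrix.of_apply]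
          rw [if_neg (by simp [Fin.ext_iff]; omega), if_pos ⟨by omega, hpj⟩]
          ring
        · rw [if_neg hk2]
          simp only [GBV, Matrix.of_apply]
          rw [if_neg (fun h => hk (by rw [h])), if_neg]
          · ring
          · rintro ⟨h1, h2⟩
            exact hk2 (by simp [Fin.ext_iff]; omega)
    rw [Finset.sum_congr rfl (fun k _ => key k), Finset.sum_add_distrib,
      Finset.sum_ite_eq' Finset.univ j (fun _ => M i j),
      Finset.sum_ite_eq' Finset.univ (⟨(j : ℕ) - 1, hjlt⟩ : Fin (n+1))
        (fun k => -(mtBV n x ((j : ℕ) + 1) p) * M i k)]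
    simp only [Finset.mem_univ, if_pos]
    ring
  · rw [dif_neg hpj]
    have key : ∀ k : Fin (n+1), M i k * GBV n x p k j = (if k = j then M i j else 0) := by
      intro k
      by_cases hk : k = j
      · subst hk; simp [GBV]
      · rw [if_neg hk]
        simp only [GBV, Matrix.of_apply]
        rw [if_neg (fun h => hk (by rw [← h])), if_neg (by rintro ⟨h1, h2⟩; exact hpj h2)]
        ring
    rw [Finset.sum_congr rfl (fun k _ => key k),
      Finset.sum_ite_eq' Finset.univ j (fun _ => M i j)]
    simp

noncomputable def LmatE (n : ℕ) (x : ℕ → ℝ) (s i j : ℕ) : ℝ :=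
  if j < min i s then 0 else
    (n.choose j : ℝ) * (1 - x (i+1))^n * Pu x (min i s) i *
      hpol (uu x) (j - min i s) (i+1 - min i s) (i+1)

noncomputable def UmatE (n : ℕ) (x : ℕ → ℝ) (t i j : ℕ) : ℝ :=
  if j < i then 0 else if i < t ∧ i ≠ j then 0 else
    (n.choose j : ℝ) * (1 - x (i+1))^n * Pu x i i *
      hpol (uu x) (j - i) (min i t + 1) (i+1)


section BVProof
variable (n : ℕ) (x : ℕ → ℝ)
    (hx : ∀ k, 1 ≤ k → k ≤ n + 1 → 0 < x k ∧ x k < 1)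
    (hmono : ∀ k l, 1 ≤ k → k < l → l ≤ n + 1 → x k < x l)

include hx hmono in
lemma mult_id (s i : ℕ) (h1 : s + 1 ≤ i) (h2 : i ≤ n) :
    mBV n x (i+1) (s+1) * ((1 - x i)^n * Pu x s (i-1)) = (1 - x (i+1))^n * Pu x s i := by
  have hone : ∀ m, 1 ≤ m → m ≤ n+1 → (0:ℝ) < 1 - x m := by
    intro m hm1 hm2; linarith [(hx m hm1 hm2).2]
  have hii : i - 1 + 1 = i := by omega
  have hPi := Pu_eq n x hx s i (by omega) h2
  have hPi1 := Pu_eq n x hx s (i-1) (by omega) (by omega)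
  rw [hii] at hPi1
  unfold mBV
  rw [show i + 1 - (s+1) = i - s from by omega, show i + 1 - 1 = i from rfl,
    show s + 1 - 1 = s from rfl]
  rw [prod_Icc_one (fun k => x (i+1) - x (i+1-k)) s,
    prod_Icc_two (fun k => x i - x (i+1-k)) s]
  have hq1 : ∀ k ∈ Finset.range s, x (i+1) - x (i+1-(1+k)) = x (i+1) - x (i-k) := by
    intro k _; congr 2; omega
  have hq2 : ∀ k ∈ Finset.range s, x i - x (i+1-(2+k)) = x i - x (i-1-k) := by
    intro k _; congr 2; omega
  rw [Finset.prod_congr rfl hq1, Finset.prod_congr rfl hq2, hPi, hPi1]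
  obtain ⟨c, rfl⟩ : ∃ c, n = s + 1 + c := ⟨n - s - 1, by omega⟩
  rw [show s + 1 + c + 1 - (s + 1) = c + 1 from by omega,
    show s + 1 + c + 2 - (s + 1) = c + 2 from by omega]
  have hA1 : (1:ℝ) - x (i+1) ≠ 0 := ne_of_gt (hone (i+1) (by omega) (by omega))
  have hA2 : (1:ℝ) - x i ≠ 0 := ne_of_gt (hone i (by omega) (by omega))
  have hA3 : (1:ℝ) - x (i-s) ≠ 0 := ne_of_gt (hone (i-s) (by omega) (by omega))
  have hR1 : ∏ k ∈ Finset.range s, (1 - x (i-k)) ≠ 0 := by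
    apply Finset.prod_ne_zero_iff.2
    intro k hk; simp only [Finset.mem_range] at hk
    exact ne_of_gt (hone (i-k) (by omega) (by omega))
  have hR2 : ∏ k ∈ Finset.range s, (1 - x (i-1-k)) ≠ 0 := by
    apply Finset.prod_ne_zero_iff.2
    intro k hk; simp only [Finset.mem_range] at hk
    exact ne_of_gt (hone (i-1-k) (by omega) (by omega))
  have hQ2 : ∏ k ∈ Finset.range s, (x i - x (i-1-k)) ≠ 0 := by
    apply Finset.prod_ne_zero_iff.2
    intro k hk; simp only [Finset.mem_range] at hk
    have := hmono (i-1-k) i (by omega) (by omega) (by omega)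
    linarith
  have htel := tel_id x s i h1
  have helper : ∀ (A B E F G H Q J : ℝ), B ≠ 0 → G ≠ 0 → J ≠ 0 →
      A * (E * F) * J = H * Q * (B * G) → (A / B) * (E * (F / G)) = H * (Q / J) := by
    intro A B E F G H Q J hB hG hJ h
    field_simp
    linear_combination h
  apply helper _ _ _ _ _ _ _ _
    (by positivity)
    (by exact mul_ne_zero (pow_ne_zero _ hA2) hR2)
    (by exact mul_ne_zero (pow_ne_zero _ hA1) hR1)
  linear_combination ((1 - x (i+1))^(c+1+s) * (1 - x i)^(c+1+s) *
    (∏ k ∈ Finset.range s, (x (i + 1) - x (i - k))) *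
    (∏ k ∈ Finset.range s, (x i - x (i - 1 - k)))) * htel

include hx hmono in
lemma diag_id (i : ℕ) (hi : i ≤ n) :
    (n.choose i : ℝ) * (1 - x (i+1))^n * Pu x i i = pBV n x (i+1) := by
  have hone : ∀ m, 1 ≤ m → m ≤ n+1 → (0:ℝ) < 1 - x m := by
    intro m hm1 hm2; linarith [(hx m hm1 hm2).2]
  unfold pBV
  rw [show i + 1 - 1 = i from rfl, show n + 1 - (i+1) = n - i from by omega]
  rw [Finset.prod_Ico_eq_prod_range, show i + 1 - 1 = i from rfl,
    prod_Icc_one (fun k => 1 - x k) i]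
  rw [Pu_eq n x hx i i le_rfl hi]
  have hrefl : ∏ k ∈ Finset.range i, (x (i+1) - x (i-k)) =
      ∏ k ∈ Finset.range i, (x (i+1) - x (1+k)) := by
    rw [← Finset.prod_range_reflect (fun k => x (i+1) - x (1+k)) i]
    apply Finset.prod_congr rfl
    intro k hk; simp only [Finset.mem_range] at hk; congr 2; omega
  have hrefl2 : ∏ k ∈ Finset.range i, (1 - x (i-k)) =
      ∏ k ∈ Finset.range i, (1 - x (1+k)) := by
    rw [← Finset.prod_range_reflect (fun k => 1 - x (1+k)) i]
    apply Finset.prod_congr rfl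
    intro k hk; simp only [Finset.mem_range] at hk; congr 2; omega
  rw [hrefl, hrefl2]
  obtain ⟨c, rfl⟩ : ∃ c, n = i + c := ⟨n - i, by omega⟩
  rw [show i + c - i = c from by omega]
  have hA1 : (1:ℝ) - x (i+1) ≠ 0 := ne_of_gt (hone (i+1) (by omega) (by omega))
  have hR : ∏ k ∈ Finset.range i, (1 - x (1+k)) ≠ 0 := by
    apply Finset.prod_ne_zero_iff.2
    intro k hk; simp only [Finset.mem_range] at hk
    exact ne_of_gt (hone (1+k) (by omega) (by omega))
  have helper : ∀ (X Q G H J : ℝ), G ≠ 0 → J ≠ 0 →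
      X * Q * J = H * G → X * (Q / G) = H / J := by
    intro X Q G H J hG hJ h
    field_simp
    linear_combination h
  apply helper _ _ _ _ _ (by exact mul_ne_zero (pow_ne_zero _ hA1) hR) hR
  ring

include hx in
lemma bin_id (j t : ℕ) (hj1 : 1 ≤ j) (hj2 : j ≤ n) (ht : t ≤ n) :
    mtBV n x (j+1) (t+1) * (n.choose (j-1) : ℝ) = (n.choose j : ℝ) * uu x (t+1) := by
  have hone : (0:ℝ) < 1 - x (t+1) := by
    linarith [(hx (t+1) (by omega) (by omega)).2]
  obtain ⟨j', rfl⟩ : ∃ j', j = j' + 1 := ⟨j - 1, by omega⟩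
  unfold mtBV uu
  rw [show j' + 1 - 1 = j' from rfl]
  have hch : ((n.choose (j'+1) : ℝ)) * ((j' : ℝ) + 1) = (n.choose j' : ℝ) * ((n : ℝ) - (j' : ℝ)) := by
    have h1 := Nat.choose_succ_right_eq n j'
    have h2 : ((n.choose (j'+1) * (j'+1) : ℕ) : ℝ) = ((n.choose j' * (n - j') : ℕ) : ℝ) := by
      exact_mod_cast congrArg Nat.cast h1
    push_cast [Nat.cast_sub (by omega : j' ≤ n)] at h2
    linarith
  have hne : ((j' : ℝ) + 1) ≠ 0 := by positivity
  field_simp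
  push_cast
  linear_combination (-(x (t+1)) * (1 - x (t+1)) - x (t+1)^2) * hch

include hx hmono in
lemma claim1 (A : Matrix (Fin (n + 1)) (Fin (n + 1)) ℝ)
    (hA : ∀ i j, A i j =
      (n.choose j : ℝ) * (1 - x ((i : ℕ) + 1)) ^ (n - (j : ℕ)) * x ((i : ℕ) + 1) ^ (j : ℕ)) :
    ∀ s, s ≤ n → (((List.range s).reverse.map fun t => FBV n x (t+1)).prod) * A =
      Matrix.of fun i j : Fin (n+1) => LmatE n x s (i : ℕ) (j : ℕ) := by
  intro s hs
  induction s with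
  | zero =>
      simp only [List.range_zero, List.reverse_nil, List.map_nil, List.prod_nil, one_mul]
      ext i j
      rw [hA i j, Matrix.of_apply]
      unfold LmatE
      rw [Nat.min_zero, if_neg (by omega)]
      unfold Pu
      rw [Finset.range_zero, Finset.prod_empty]
      rw [Nat.sub_zero, Nat.sub_zero, hpol_single]
      have hone : (0:ℝ) < 1 - x ((i:ℕ)+1) := by
        linarith [(hx ((i:ℕ)+1) (by omega) (by omega)).2]
      have hpow : (1 - x ((i:ℕ)+1))^n =
          (1 - x ((i:ℕ)+1))^(n - (j:ℕ)) * (1 - x ((i:ℕ)+1))^(j:ℕ) := by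
        rw [← pow_add]; congr 1; omega
      rw [hpow]
      unfold uu
      rw [div_pow]
      field_simp
  | succ s ih =>
      have hrev : (List.range (s+1)).reverse = s :: (List.range s).reverse := by
        rw [List.range_succ, List.reverse_append]; simp
      rw [hrev, List.map_cons, List.prod_cons, Matrix.mul_assoc, ih (by omega)]
      ext i j
      rw [FBV_mul_apply n x (s+1) (by omega), Matrix.of_apply]
      by_cases hsi : s + 1 ≤ (i : ℕ)
      · rw [dif_pos hsi]
        simp only [Matrix.of_apply]
        have e1 : min (i:ℕ) s = s := by omega
        have e2 : min ((i:ℕ)-1) s = s := by omega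
        have e3 : min (i:ℕ) (s+1) = s+1 := by omega
        unfold LmatE
        rw [e1, e2, e3]
        have e4 : (i:ℕ) - 1 + 1 = (i:ℕ) := by omega
        rw [e4]
        by_cases hjs : (j : ℕ) < s
        · rw [if_pos hjs, if_pos hjs, if_pos (by omega)]; ring
        · by_cases hjs2 : (j : ℕ) = s
          · rw [if_neg (by omega), if_neg (by omega), if_pos (by omega)]
            rw [hjs2, Nat.sub_self, hpol_zero, hpol_zero]
            linear_combination (-(n.choose s : ℝ)) * mult_id n x hx hmono s (i:ℕ) hsi (by omega)
          · rw [if_neg (by omega), if_neg (by omega), if_neg (by omega)]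
            have hd := hpol_diff (uu x) ((j:ℕ)-s-1) ((i:ℕ)-s) (i:ℕ) (by omega)
            have hm := mult_id n x hx hmono s (i:ℕ) hsi (by omega)
            have hPs : Pu x (s+1) (i:ℕ) = Pu x s (i:ℕ) * (uu x ((i:ℕ)+1) - uu x ((i:ℕ)-s)) := by
              unfold Pu; rw [Finset.prod_range_succ]
            rw [hPs]
            rw [show (j:ℕ) - s = ((j:ℕ)-s-1)+1 from by omega,
              show (i:ℕ) + 1 - s = ((i:ℕ)-s)+1 from by omega,
              show (j:ℕ) - (s+1) = (j:ℕ)-s-1 from by omega,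
              show (i:ℕ) + 1 - (s+1) = (i:ℕ)-s from by omega]
            linear_combination ((n.choose (j:ℕ) : ℝ) * ((1 - x ((i:ℕ)+1))^n * Pu x s (i:ℕ))) * hd
              - ((n.choose (j:ℕ) : ℝ) * hpol (uu x) (((j:ℕ)-s-1)+1) ((i:ℕ)-s) (i:ℕ)) * hm
      · rw [dif_neg hsi]
        simp only [Matrix.of_apply]
        have e1 : min (i:ℕ) s = (i:ℕ) := by omega
        have e2 : min (i:ℕ) (s+1) = (i:ℕ) := by omega
        unfold LmatE
        rw [e1, e2, sub_zero]

lemma bridge : (Matrix.of fun i j : Fin (n+1) => LmatE n x n (i : ℕ) (j : ℕ)) =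
    Matrix.of fun i j : Fin (n+1) => UmatE n x 0 (i : ℕ) (j : ℕ) := by
  ext i j
  simp only [Matrix.of_apply]
  unfold LmatE UmatE
  rw [show min (i:ℕ) n = (i:ℕ) from by omega, show min (i:ℕ) 0 = 0 from by omega,
    show (i:ℕ) + 1 - (i:ℕ) = 0 + 1 from by omega]
  simp only [show ¬((i:ℕ) < 0 ∧ (i:ℕ) ≠ (j:ℕ)) from by omega, if_false]

include hx hmono in
lemma claim2 : ∀ t, t ≤ n →
    (Matrix.of fun i j : Fin (n+1) => UmatE n x 0 (i : ℕ) (j : ℕ)) *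
      ((List.range t).map fun r => GBV n x (r+1)).prod =
      Matrix.of fun i j : Fin (n+1) => UmatE n x t (i : ℕ) (j : ℕ) := by
  intro t ht
  induction t with
  | zero => simp
  | succ t ih =>
      rw [List.range_succ, List.map_append, List.prod_append, List.map_cons, List.map_nil,
        List.prod_cons, List.prod_nil, mul_one, ← Matrix.mul_assoc, ih (by omega)]
      ext i j
      rw [mul_GBV_apply n x (t+1) (by omega), Matrix.of_apply]
      simp only [Matrix.of_apply, Fin.val_mk]
      by_cases htj : t + 1 ≤ (j : ℕ)
      · rw [dif_pos htj]
        by_cases hji : (j : ℕ) < (i : ℕ)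
        · -- below diagonal: everything 0
          unfold UmatE
          rw [if_pos hji, if_pos (by omega : (j:ℕ)-1 < (i:ℕ)), if_pos hji]
          ring
        · by_cases hij : (i : ℕ) = (j : ℕ)
          · -- diagonal entry, subtracted term vanishes
            unfold UmatE
            rw [if_neg hji, if_neg (by omega), if_pos (by omega : ((j:ℕ)-1 : ℕ) < (i:ℕ)),
              if_neg hji, if_neg (by omega)]
            rw [show (j:ℕ) - (i:ℕ) = 0 from by omega, hpol_zero, hpol_zero]
            ring
          · -- i < j
            have hilt : (i : ℕ) < (j : ℕ) := by omega
            by_cases hit : (i : ℕ) < t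
            · unfold UmatE
              rw [if_neg hji, if_pos ⟨hit, by omega⟩,
                if_neg (by omega : ¬ ((j:ℕ)-1 : ℕ) < (i:ℕ)), if_pos ⟨hit, by omega⟩,
                if_neg hji, if_pos ⟨by omega, by omega⟩]
              ring
            · by_cases hieqt : (i : ℕ) = t
              · -- pivotal row: entry becomes zero
                unfold UmatE
                rw [if_neg hji, if_neg (by omega), if_neg (by omega : ¬ ((j:ℕ)-1 : ℕ) < (i:ℕ)),
                  if_neg (by omega), if_neg hji, if_pos ⟨by omega, by omega⟩]
                rw [hieqt]
                rw [show min t t = t from by omega]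
                rw [hpol_single, hpol_single]
                have hb := bin_id n x hx ((j:ℕ)) t (by omega) (by omega) (by omega)
                rw [show (j:ℕ) - t = ((j:ℕ)-1-t)+1 from by omega, pow_succ]
                linear_combination (-(1 - x (t+1))^n * Pu x t t * uu x (t+1)^((j:ℕ)-1-t)) * hb
              · -- active rows i ≥ t+1
                have hit2 : t + 1 ≤ (i : ℕ) := by omega
                unfold UmatE
                rw [if_neg hji, if_neg (by omega), if_neg (by omega : ¬ ((j:ℕ)-1 : ℕ) < (i:ℕ)),
                  if_neg (by omega), if_neg hji, if_neg (by omega)]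
                rw [show min (i:ℕ) t = t from by omega, show min (i:ℕ) (t+1) = t+1 from by omega]
                have hrec : hpol (uu x) (((j:ℕ)-(i:ℕ)-1)+1) (t+1) ((i:ℕ)+1) =
                    hpol (uu x) (((j:ℕ)-(i:ℕ)-1)+1) (t+2) ((i:ℕ)+1) +
                      uu x (t+1) * hpol (uu x) ((j:ℕ)-(i:ℕ)-1) (t+1) ((i:ℕ)+1) := by
                  rw [hpol_succ, if_neg (by omega)]
                have hb := bin_id n x hx ((j:ℕ)) t (by omega) (by omega) (by omega)
                rw [show (j:ℕ) - (i:ℕ) = ((j:ℕ)-(i:ℕ)-1)+1 from by omega,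
                  show (j:ℕ) - 1 - (i:ℕ) = (j:ℕ)-(i:ℕ)-1 from by omega]
                rw [hrec]
                linear_combination (-(1 - x ((i:ℕ)+1))^n * Pu x (i:ℕ) (i:ℕ) *
                  hpol (uu x) ((j:ℕ)-(i:ℕ)-1) (t+1) ((i:ℕ)+1)) * hb
      · rw [dif_neg htj]
        rw [sub_zero]
        unfold UmatE
        by_cases hji : (j : ℕ) < (i : ℕ)
        · rw [if_pos hji, if_pos hji]
        · by_cases hij : (i : ℕ) = (j : ℕ)
          · rw [if_neg hji, if_neg (by omega), if_neg hji, if_neg (by omega)]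
            rw [show (j:ℕ) - (i:ℕ) = 0 from by omega, hpol_zero, hpol_zero]
          · rw [if_neg hji, if_pos ⟨by omega, by omega⟩, if_neg hji, if_pos ⟨by omega, by omega⟩]

include hx hmono in
lemma Umat_final : (Matrix.of fun i j : Fin (n+1) => UmatE n x n (i : ℕ) (j : ℕ)) = DBV n x := by
  ext i j
  simp only [Matrix.of_apply, DBV, Matrix.diagonal_apply]
  by_cases hij : i = j
  · subst hij
    rw [if_pos rfl]
    unfold UmatE
    rw [if_neg (by omega), if_neg (by simp), Nat.sub_self, hpol_zero, mul_one]
    exact diag_id n x hx hmono (i:ℕ) (by omega)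
  · rw [if_neg hij]
    have hij' : (i : ℕ) ≠ (j : ℕ) := fun h => hij (Fin.ext h)
    unfold UmatE
    by_cases hji : (j:ℕ) < (i:ℕ)
    · rw [if_pos hji]
    · rw [if_neg hji, if_pos ⟨by omega, hij'⟩]

include hx hmono in
lemma pBV_ne (i : ℕ) (hi : i ≤ n) : pBV n x (i+1) ≠ 0 := by
  rw [← diag_id n x hx hmono i hi]
  have h1 : (0:ℝ) < 1 - x (i+1) := by linarith [(hx (i+1) (by omega) (by omega)).2]
  have h2 := Pu_pos n x hx hmono i i le_rfl hi
  have h3 : (0:ℝ) < (n.choose i : ℝ) := by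
    exact_mod_cast Nat.choose_pos (by omega : i ≤ n)
  positivity

lemma FBV_det (p : ℕ) : (FBV n x p).det = 1 := by
  rw [Matrix.det_of_lowerTriangular (FBV n x p)]
  · simp [FBV]
  · intro i j hij
    simp only [OrderDual.toDual_lt_toDual] at hij
    simp only [FBV, Matrix.of_apply]
    rw [if_neg (by exact fun h => absurd h (ne_of_lt hij)), if_neg (by omega)]

lemma GBV_det (p : ℕ) : (GBV n x p).det = 1 := by
  rw [Matrix.det_of_upperTriangular]
  · simp [GBV]
  · intro i j hij
    simp only [Function.id_def] at hij
    simp only [GBV, Matrix.of_apply]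
    rw [if_neg (by exact fun h => absurd h (ne_of_gt hij)), if_neg (by omega)]


end BVProof

set_option maxHeartbeats 1000000 in
/-- Bidiagonal factorization of the inverse of the Bernstein–Vandermonde matrix:
A⁻¹ = G₁G₂⋯Gₙ D⁻¹ Fₙ⋯F₁. -/
theorem bernstein_vandermonde_inverse_bidiagonal (n : ℕ) (x : ℕ → ℝ)
    (hx : ∀ k, 1 ≤ k → k ≤ n + 1 → 0 < x k ∧ x k < 1)
    (hmono : ∀ k l, 1 ≤ k → k < l → l ≤ n + 1 → x k < x l)
    (A : Matrix (Fin (n + 1)) (Fin (n + 1)) ℝ)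
    (hA : ∀ i j, A i j =
      (n.choose j : ℝ) * (1 - x ((i : ℕ) + 1)) ^ (n - (j : ℕ)) * x ((i : ℕ) + 1) ^ (j : ℕ)) :
    A⁻¹ = ((List.range n).map fun t => GBV n x (t + 1)).prod * (DBV n x)⁻¹ *
      (((List.range n).reverse.map fun t => FBV n x (t + 1)).prod) := by

  set Fp := ((List.range n).reverse.map fun t => FBV n x (t + 1)).prod with hFp
  set Gp := ((List.range n).map fun t => GBV n x (t + 1)).prod with hGp
  have hFA : Fp * A = Matrix.of fun i j : Fin (n+1) => LmatE n x n (i : ℕ) (j : ℕ) :=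
    claim1 n x hx hmono A hA n le_rfl
  have hKEY : Fp * A * Gp = DBV n x := by
    rw [hFA, bridge, claim2 n x hx hmono n le_rfl, Umat_final n x hx hmono]
  have hdet_prod : ∀ (l : List (Matrix (Fin (n+1)) (Fin (n+1)) ℝ)),
      (∀ M ∈ l, M.det = 1) → l.prod.det = 1 := by
    intro l hl
    have := MonoidHom.map_list_prod (Matrix.detMonoidHom (n := Fin (n+1)) (R := ℝ)) l
    simp only [Matrix.coe_detMonoidHom] at this
    rw [this]
    apply List.prod_eq_one
    intro y hy
    simp only [List.mem_map] at hy
    obtain ⟨M, hM, rfl⟩ := hy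
    exact hl M hM
  have hFdet : IsUnit Fp.det := by
    rw [hFp, hdet_prod _ ?_]
    · exact isUnit_one
    · intro M hM
      simp only [List.mem_map] at hM
      obtain ⟨t, _, rfl⟩ := hM
      exact FBV_det n x (t+1)
  have hDdet : IsUnit (DBV n x).det := by
    rw [isUnit_iff_ne_zero, DBV, Matrix.det_diagonal]
    apply Finset.prod_ne_zero_iff.2
    intro k _
    exact pBV_ne n x hx hmono (k : ℕ) (by omega)
  have hDD : DBV n x * (DBV n x)⁻¹ = 1 := Matrix.mul_nonsing_inv _ hDdet
  apply Matrix.inv_eq_right_inv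
  have hX : Fp * (A * (Gp * (DBV n x)⁻¹ * Fp)) = Fp := by
    calc Fp * (A * (Gp * (DBV n x)⁻¹ * Fp))
        = Fp * A * Gp * ((DBV n x)⁻¹ * Fp) := by
          simp only [Matrix.mul_assoc]
      _ = DBV n x * (DBV n x)⁻¹ * Fp := by rw [hKEY, Matrix.mul_assoc]
      _ = Fp := by rw [hDD, one_mul]
  have h2 : Fp⁻¹ * (Fp * (A * (Gp * (DBV n x)⁻¹ * Fp))) = Fp⁻¹ * Fp := by rw [hX]
  rwa [← Matrix.mul_assoc, Matrix.nonsing_inv_mul _ hFdet, one_mul] at h2
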